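/- Let D ⊂ ℤ be a nonempty finite set such that 0 ∈ D or D = -D (where -D = {-x : x ∈ D}). If P ∈ ℤ[X] divides some nonzero polynomial all of whose coefficients lie in D, then for every integer n > 1 the product P(X)·Φ_n(X), where Φ_n(X) is the n-th cyclotomic polynomial, also divides some nonzero polynomial all of whose coefficients lie in D. -/

import Mathlib

open Polynomial

/-- `Q` is nonzero and all its coefficients of `X^0, ..., X^(deg Q)` lie in `D`. -/
def HasCoeffsIn (D : Finset ℤ) (Q : Polynomial ℤ) : Prop :=
  Q ≠ 0 ∧ ∀ i ≤ Q.natDegree, Q.coeff i ∈ D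

/-- Coefficients of `Q * ∑ εⱼ X^(jm)` when blocks don't overlap. -/
lemma block_coeff (Q : Polynomial ℤ) (ε : ℕ → ℤ) (N m : ℕ) (hm : Q.natDegree < m)
    (k : ℕ) (hk : k / m < N) :
    (Q * ∑ j ∈ Finset.range N, C (ε j) * X ^ (j * m)).coeff k
      = ε (k / m) * Q.coeff (k % m) := by
  have hm0 : 0 < m := lt_of_le_of_lt (Nat.zero_le _) hm
  rw [Finset.mul_sum, Polynomial.finset_sum_coeff]
  have hterm : ∀ j, (Q * (C (ε j) * X ^ (j * m))).coeff k
      = if j * m ≤ k then ε j * Q.coeff (k - j * m) else 0 := by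
    intro j
    have h1 : Q * (C (ε j) * X ^ (j * m)) = (C (ε j) * Q) * X ^ (j * m) := by ring
    rw [h1, Polynomial.coeff_mul_X_pow']
    split <;> simp [Polynomial.coeff_C_mul]
  rw [Finset.sum_eq_single (k / m)]
  · rw [hterm, if_pos (Nat.div_mul_le_self k m)]
    have harg : k - k / m * m = k % m := by
      rw [Nat.sub_eq_iff_eq_add (Nat.div_mul_le_self k m)]
      exact (Nat.mod_add_div' k m).symm
    rw [harg]
  · intro j _ hj
    rw [hterm]
    split
    · rename_i hjk
      have hjle : j ≤ k / m := (Nat.le_div_iff_mul_le hm0).mpr hjk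
      have hjlt : j < k / m := lt_of_le_of_ne hjle hj
      have h2 : (j + 1) * m ≤ (k / m) * m := Nat.mul_le_mul_right m hjlt
      have h3 : (k / m) * m ≤ k := Nat.div_mul_le_self k m
      have h4 : Q.natDegree < k - j * m := by
        have : j * m + m ≤ k := by
          calc j * m + m = (j + 1) * m := by ring
          _ ≤ k := le_trans h2 h3
        omega
      rw [Polynomial.coeff_eq_zero_of_natDegree_lt h4, mul_zero]
    · rfl
  · intro h
    exact absurd (Finset.mem_range.mpr hk) h

lemma cyclotomic_not_dvd {n : ℕ} (hn : 0 < n) {f : Polynomial ℤ}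
    (hf : ∀ z : ℂ, IsPrimitiveRoot z n → Polynomial.aeval z f ≠ 0) :
    ¬ cyclotomic n ℤ ∣ f := by
  intro h
  set ζ : ℂ := Complex.exp (2 * Real.pi * Complex.I / n) with hζdef
  have hζ : IsPrimitiveRoot ζ n := Complex.isPrimitiveRoot_exp n hn.ne'
  have hroot : Polynomial.aeval ζ (cyclotomic n ℤ) = 0 := by
    have h1 := hζ.isRoot_cyclotomic hn
    rw [Polynomial.aeval_def, ← Polynomial.eval_map, Polynomial.map_cyclotomic]
    exact h1
  obtain ⟨g, rfl⟩ := h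
  apply hf ζ hζ
  rw [map_mul, hroot, zero_mul]

lemma cyclotomic_prime_int {n : ℕ} (hn : 0 < n) : Prime (cyclotomic n ℤ) :=
  UniqueFactorizationMonoid.irreducible_iff_prime.mp (cyclotomic.irreducible hn)

/-- Case `n ∤ m`: `Φₙ ∣ 1 + X^m + ⋯ + X^((n-1)m)`. -/
lemma lemA {n m : ℕ} (hn : 1 < n) (hnm : ¬ n ∣ m) :
    cyclotomic n ℤ ∣ ∑ j ∈ Finset.range n, (X : Polynomial ℤ) ^ (j * m) := by
  have hprime := cyclotomic_prime_int (n := n) (by omega)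
  have key : (∑ j ∈ Finset.range n, (X : Polynomial ℤ) ^ (j * m)) * (X ^ m - 1)
      = X ^ (n * m) - 1 := by
    have h1 := geom_sum_mul ((X : Polynomial ℤ) ^ m) n
    simp only [← pow_mul'] at h1
    rw [h1]
  have hdvd1 : cyclotomic n ℤ ∣
      (∑ j ∈ Finset.range n, (X : Polynomial ℤ) ^ (j * m)) * (X ^ m - 1) := by
    rw [key]
    refine (cyclotomic.dvd_X_pow_sub_one n ℤ).trans ?_
    have h2 := sub_dvd_pow_sub_pow ((X : Polynomial ℤ) ^ n) 1 m
    simpa [← pow_mul] using h2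
  rcases hprime.dvd_mul.mp hdvd1 with h | h
  · exact h
  · exfalso
    revert h
    apply cyclotomic_not_dvd (by omega : 0 < n)
    intro z hz
    simp only [map_sub, map_pow, map_one, aeval_X]
    intro hcontra
    exact hnm ((hz.pow_eq_one_iff_dvd m).mp (sub_eq_zero.mp hcontra))

/-- Case `n ∣ m`: `Φₙ ∣ 1 - X^m + X^(2m) - ⋯ - X^((2n-1)m)`. -/
lemma lemC {n m : ℕ} (hn : 1 < n) (hnm : n ∣ m) :
    cyclotomic n ℤ ∣ ∑ j ∈ Finset.range (2 * n), (-1 : Polynomial ℤ) ^ j * X ^ (j * m) := by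
  have hprime := cyclotomic_prime_int (n := n) (by omega)
  have key : (∑ j ∈ Finset.range (2 * n), (-1 : Polynomial ℤ) ^ j * X ^ (j * m))
      * (-(X ^ m + 1)) = X ^ (m * (2 * n)) - 1 := by
    have h1 := geom_sum_mul (-(X : Polynomial ℤ) ^ m) (2 * n)
    calc (∑ j ∈ Finset.range (2 * n), (-1 : Polynomial ℤ) ^ j * X ^ (j * m)) * (-(X ^ m + 1))
        = (∑ j ∈ Finset.range (2 * n), (-(X : Polynomial ℤ) ^ m) ^ j)
            * (-(X : Polynomial ℤ) ^ m - 1) := by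
          congr 1
          · refine Finset.sum_congr rfl fun j _ => ?_
            rw [neg_pow ((X : Polynomial ℤ) ^ m) j, ← pow_mul']
          · ring
      _ = (-(X : Polynomial ℤ) ^ m) ^ (2 * n) - 1 := h1
      _ = X ^ (m * (2 * n)) - 1 := by rw [(even_two_mul n).neg_pow, ← pow_mul]
  have hdvd1 : cyclotomic n ℤ ∣
      (∑ j ∈ Finset.range (2 * n), (-1 : Polynomial ℤ) ^ j * X ^ (j * m)) * (-(X ^ m + 1)) := by
    rw [key]
    refine (cyclotomic.dvd_X_pow_sub_one n ℤ).trans ?_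
    have h2 := sub_dvd_pow_sub_pow ((X : Polynomial ℤ) ^ n) 1 (2 * m)
    have h5 : m * (2 * n) = n * (2 * m) := by ring
    rw [h5]
    simpa [← pow_mul] using h2
  rcases hprime.dvd_mul.mp hdvd1 with h | h
  · exact h
  · exfalso
    revert h
    apply cyclotomic_not_dvd (by omega : 0 < n)
    intro z hz
    have hz1 : z ^ m = 1 := (hz.pow_eq_one_iff_dvd m).mpr hnm
    simp only [map_neg, map_add, map_pow, map_one, aeval_X, hz1]
    norm_num

/-- Main construction: multiply `Q` by a block polynomial. -/
lemma main_aux (D : Finset ℤ) (P Q : Polynomial ℤ) (hQ0 : Q ≠ 0)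
    (hPQ : P ∣ Q) (n : ℕ) (m N : ℕ) (hm : Q.natDegree < m) (hN : 0 < N)
    (ε : ℕ → ℤ)
    (hcoeff : ∀ j < N, ∀ i < m, ε j * Q.coeff i ∈ D)
    (hε0 : ε 0 = 1)
    (hdvd : cyclotomic n ℤ ∣ ∑ j ∈ Finset.range N, C (ε j) * X ^ (j * m)) :
    ∃ Q' : Polynomial ℤ, HasCoeffsIn D Q' ∧ P * cyclotomic n ℤ ∣ Q' := by
  have hm0 : 0 < m := lt_of_le_of_lt (Nat.zero_le _) hm
  set g := ∑ j ∈ Finset.range N, C (ε j) * X ^ (j * m) with hg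
  have hgne : g ≠ 0 := by
    have h1 : ((1 : Polynomial ℤ) * g).coeff 0 = ε (0 / m) * (1 : Polynomial ℤ).coeff (0 % m) :=
      block_coeff 1 ε N m (by simpa using hm0) 0 (by simpa [Nat.zero_div] using hN)
    intro h
    rw [h, mul_zero] at h1
    simp [Nat.zero_div, Nat.zero_mod, hε0] at h1
  have hgdeg : g.natDegree ≤ (N - 1) * m := by
    apply Polynomial.natDegree_sum_le_of_forall_le
    intro j hj
    refine (Polynomial.natDegree_C_mul_le _ _).trans ?_
    rw [Polynomial.natDegree_X_pow]
    have : j ≤ N - 1 := by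
      have := Finset.mem_range.mp hj; omega
    exact Nat.mul_le_mul_right m this
  refine ⟨Q * g, ⟨mul_ne_zero hQ0 hgne, ?_⟩, mul_dvd_mul hPQ hdvd⟩
  intro i hi
  have hideg : i ≤ Q.natDegree + (N - 1) * m :=
    le_trans hi (le_trans (Polynomial.natDegree_mul_le) (by omega))
  have hilt : i / m < N := by
    rw [Nat.div_lt_iff_lt_mul hm0]
    have : Q.natDegree + (N - 1) * m < N * m := by
      have : (N - 1) * m + m = N * m := by
        cases N with
        | zero => omega
        | succ k => simp [Nat.succ_sub_one, Nat.succ_mul]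
      omega
    omega
  rw [block_coeff Q ε N m hm i hilt]
  exact hcoeff _ hilt _ (Nat.mod_lt _ hm0)

/-- Let `D ⊂ ℤ` be a nonempty finite digit set with `0 ∈ D` or `D = -D`. If `P`
divides a nonzero polynomial with all coefficients in `D`, then for every `n > 1`
so does `P · Φₙ`, where `Φₙ` is the `n`-th cyclotomic polynomial. -/
theorem mul_cyclotomic_dvd_of_digit_multiple
    (D : Finset ℤ) (hD : D.Nonempty)
    (hD' : (0 : ℤ) ∈ D ∨ ∀ x : ℤ, x ∈ D ↔ -x ∈ D)
    (P : Polynomial ℤ)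
    (hP : ∃ Q : Polynomial ℤ, HasCoeffsIn D Q ∧ P ∣ Q)
    (n : ℕ) (hn : 1 < n) :
    ∃ Q : Polynomial ℤ, HasCoeffsIn D Q ∧ P * Polynomial.cyclotomic n ℤ ∣ Q := by
  obtain ⟨Q, ⟨hQ0, hQD⟩, hPQ⟩ := hP
  by_cases hnd : n ∣ (Q.natDegree + 1)
  · rcases hD' with h0 | hneg
    · -- use m = d + 2, which is not divisible by n
      have hnm : ¬ n ∣ (Q.natDegree + 2) := by
        intro h
        have := Nat.dvd_sub h hnd
        simp at this
        omega
      refine main_aux D P Q hQ0 hPQ n (Q.natDegree + 2) n (by omega) (by omega)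
        (fun _ => 1) ?_ rfl ?_
      · intro j _ i hi
        rw [one_mul]
        by_cases h : i ≤ Q.natDegree
        · exact hQD i h
        · rw [Polynomial.coeff_eq_zero_of_natDegree_lt (by omega)]
          exact h0
      · simpa using lemA hn hnm
    · -- use alternating signs with m = d + 1
      refine main_aux D P Q hQ0 hPQ n (Q.natDegree + 1) (2 * n) (by omega) (by omega)
        (fun j => (-1) ^ j) ?_ (by norm_num) ?_
      · intro j _ i hi
        have hiD : Q.coeff i ∈ D := hQD i (by omega)
        show (-1 : ℤ) ^ j * Q.coeff i ∈ D
        rcases Nat.even_or_odd j with he | ho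
        · rw [he.neg_one_pow, one_mul]; exact hiD
        · rw [ho.neg_one_pow, neg_one_mul]; exact (hneg _).mp hiD
      · have := lemC (m := Q.natDegree + 1) hn hnd
        simpa using this
  · refine main_aux D P Q hQ0 hPQ n (Q.natDegree + 1) n (by omega) (by omega)
      (fun _ => 1) ?_ rfl ?_
    · intro j _ i hi
      rw [one_mul]
      exact hQD i (by omega)
    · simpa using lemA hn hnd
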